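/- arXiv:1812.03961 — 3 statements merged into one kernel-verified Lean document; each statement's English description precedes it below -/
import Mathlib

section
/- Let n ≥ 3, τ > 0 and C₀ > 0. Let σ be a C¹ map from {x ∈ ℝⁿ : |x| ≥ 1} to symmetric n×n real matrices satisfying ‖σ(x)‖ ≤ C₀ |x|^{−τ} for all |x| ≥ 1, and set g(x) = I + σ(x) (so g_{ij}(x) = δ_{ij} + σ_{ij}(x)). Let K(y) = y/|y|² be the Kelvin transform, whose partial derivatives are ∂_i K^k(y) = δ_{ik}|y|^{−2} − 2 y_i y_k |y|^{−4}. For 0 < |y| ≤ 1 define the pulled-back metric components h_{ij}(y) = Σ_{k,l} ∂_i K^k(y) · ∂_j K^l(y) · g_{kl}(K(y)). Then there exists a constant C > 0 such that for all y with 0 < |y| ≤ 1 and all indices i, j one has |h_{ij}(y) − |y|^{−4} δ_{ij}| ≤ C |y|^{τ−4}. -/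
open scoped BigOperators

/-- The Kelvin transform `K(y) = y / |y|²` on `ℝⁿ \ {0}`. -/
noncomputable def kelvin (n : ℕ) (y : EuclideanSpace ℝ (Fin n)) : EuclideanSpace ℝ (Fin n) :=
  (‖y‖ ^ 2)⁻¹ • y

/-- The partial derivatives of the Kelvin transform:
`∂_i K^k (y) = δ_{ik} |y|^{-2} - 2 y_i y_k |y|^{-4}`. -/
noncomputable def dKelvin (n : ℕ) (y : EuclideanSpace ℝ (Fin n)) (i k : Fin n) : ℝ :=
  (if i = k then (1 : ℝ) else 0) * ‖y‖ ^ (-(2 : ℝ)) - 2 * y i * y k * ‖y‖ ^ (-(4 : ℝ))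

/-- The components of the pulled-back metric
`h_{ij}(y) = Σ_{k,l} ∂_i K^k(y) ∂_j K^l(y) g_{kl}(K(y))`, where
`g_{kl}(x) = δ_{kl} + σ_{kl}(x)`. -/
noncomputable def pulledMetric (n : ℕ) (σ : EuclideanSpace ℝ (Fin n) → Fin n → Fin n → ℝ)
    (y : EuclideanSpace ℝ (Fin n)) (i j : Fin n) : ℝ :=
  ∑ k, ∑ l, dKelvin n y i k * dKelvin n y j l *
    ((if k = l then (1 : ℝ) else 0) + σ (kelvin n y) k l)

lemma kelvin_norm (n : ℕ) (y : EuclideanSpace ℝ (Fin n)) (hy : 0 < ‖y‖) :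
    ‖kelvin n y‖ = ‖y‖⁻¹ := by
  unfold kelvin
  rw [norm_smul, Real.norm_eq_abs, abs_of_nonneg (by positivity)]
  field_simp

lemma euclid_sum_sq (n : ℕ) (y : EuclideanSpace ℝ (Fin n)) :
    ∑ k, y k * y k = ‖y‖ ^ 2 := by
  rw [EuclideanSpace.norm_eq, Real.sq_sqrt (by positivity)]
  exact Finset.sum_congr rfl fun k _ => by
    rw [Real.norm_eq_abs, sq_abs, sq]

lemma euclid_coord_le (n : ℕ) (y : EuclideanSpace ℝ (Fin n)) (k : Fin n) :
    |y k| ≤ ‖y‖ := by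
  have h1 : (y k) ^ 2 ≤ ‖y‖ ^ 2 := by
    rw [← euclid_sum_sq]
    have h := Finset.single_le_sum (f := fun l => y l * y l)
      (fun l _ => mul_self_nonneg (y l)) (Finset.mem_univ k)
    simpa [sq] using h
  calc |y k| = Real.sqrt ((y k) ^ 2) := (Real.sqrt_sq_eq_abs _).symm
    _ ≤ Real.sqrt (‖y‖ ^ 2) := Real.sqrt_le_sqrt h1
    _ = ‖y‖ := Real.sqrt_sq (norm_nonneg y)

lemma dKelvin_sum (n : ℕ) (y : EuclideanSpace ℝ (Fin n)) (hy : 0 < ‖y‖) (i j : Fin n) :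
    ∑ k, dKelvin n y i k * dKelvin n y j k
      = ‖y‖ ^ (-(4 : ℝ)) * (if i = j then (1 : ℝ) else 0) := by
  set r := ‖y‖ with hrdef
  set a := r ^ (-(2 : ℝ)) with hadef
  set b := r ^ (-(4 : ℝ)) with hbdef
  have haa : a * a = b := by
    rw [hadef, hbdef, ← Real.rpow_add hy]; norm_num
  have hr2b : r ^ 2 * b = a := by
    rw [hadef, hbdef, ← Real.rpow_natCast r 2, ← Real.rpow_add hy]; norm_num
  have key : ∀ k : Fin n, dKelvin n y i k * dKelvin n y j k
      = (if i = k then (1 : ℝ) else 0) * (if j = k then (1 : ℝ) else 0) * (a * a)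
        - (if i = k then (1 : ℝ) else 0) * y k * (2 * y j * (a * b))
        - (if j = k then (1 : ℝ) else 0) * y k * (2 * y i * (a * b))
        + (y k * y k) * (4 * y i * y j * (b * b)) := by
    intro k
    simp only [dKelvin, ← hrdef, ← hadef, ← hbdef]
    ring
  rw [Finset.sum_congr rfl fun k _ => key k]
  rw [Finset.sum_add_distrib, Finset.sum_sub_distrib, Finset.sum_sub_distrib,
    ← Finset.sum_mul, ← Finset.sum_mul, ← Finset.sum_mul, ← Finset.sum_mul,
    euclid_sum_sq]
  have e1 : ∑ k, (if i = k then (1 : ℝ) else 0) * (if j = k then (1 : ℝ) else 0)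
      = if i = j then (1 : ℝ) else 0 := by
    simp only [ite_mul, one_mul, zero_mul]
    rw [Finset.sum_ite_eq]
    by_cases h : i = j <;> simp [h, eq_comm]
  have e2 : ∑ k, (if i = k then (1 : ℝ) else 0) * y k = y i := by
    simp only [ite_mul, one_mul, zero_mul]
    rw [Finset.sum_ite_eq]; simp
  have e3 : ∑ k, (if j = k then (1 : ℝ) else 0) * y k = y j := by
    simp only [ite_mul, one_mul, zero_mul]
    rw [Finset.sum_ite_eq]; simp
  rw [e1, e2, e3]
  linear_combination (if i = j then (1 : ℝ) else 0) * haa + 4 * y i * y j * b * hr2b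

lemma dKelvin_bound (n : ℕ) (y : EuclideanSpace ℝ (Fin n)) (hy : 0 < ‖y‖) (i k : Fin n) :
    |dKelvin n y i k| ≤ 3 * ‖y‖ ^ (-(2 : ℝ)) := by
  set r := ‖y‖ with hrdef
  set a := r ^ (-(2 : ℝ)) with hadef
  set b := r ^ (-(4 : ℝ)) with hbdef
  have ha : 0 < a := Real.rpow_pos_of_pos hy _
  have hb : 0 < b := Real.rpow_pos_of_pos hy _
  have hr2b : r ^ 2 * b = a := by
    rw [hadef, hbdef, ← Real.rpow_natCast r 2, ← Real.rpow_add hy]; norm_num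
  have h1 : |(if i = k then (1 : ℝ) else 0) * a| ≤ a := by
    rcases eq_or_ne i k with h | h
    · rw [if_pos h, one_mul, abs_of_nonneg ha.le]
    · rw [if_neg h, zero_mul, abs_zero]; exact ha.le
  have h2 : |2 * y i * y k * b| ≤ 2 * a := by
    have : |2 * y i * y k * b| = 2 * (|y i| * |y k|) * b := by
      rw [abs_mul, abs_mul, abs_mul, abs_two, abs_of_nonneg hb.le]
      ring
    rw [this]
    have hik : |y i| * |y k| ≤ r ^ 2 := by
      have := mul_le_mul (euclid_coord_le n y i) (euclid_coord_le n y k)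
        (abs_nonneg _) (norm_nonneg y)
      nlinarith
    nlinarith
  calc |dKelvin n y i k| ≤ |(if i = k then (1 : ℝ) else 0) * a| + |2 * y i * y k * b| := by
        simp only [dKelvin, ← hrdef, ← hadef, ← hbdef]
        exact abs_sub _ _
    _ ≤ a + 2 * a := add_le_add h1 h2
    _ = 3 * a := by ring

/-- if `σ` is a `C¹` symmetric-matrix-valued map on `{|x| ≥ 1}` with
`‖σ(x)‖ ≤ C₀ |x|^{-τ}`, then the pulled-back metric components satisfy
`|h_{ij}(y) - |y|^{-4} δ_{ij}| ≤ C |y|^{τ-4}` on the punctured unit ball. -/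
theorem kelvin_pulled_metric_estimate (n : ℕ) (hn : 3 ≤ n) (τ C₀ : ℝ) (hτ : 0 < τ)
    (hC₀ : 0 < C₀) (σ : EuclideanSpace ℝ (Fin n) → Fin n → Fin n → ℝ)
    (hσC1 : ContDiffOn ℝ 1 σ {x : EuclideanSpace ℝ (Fin n) | 1 ≤ ‖x‖})
    (hσsymm : ∀ x : EuclideanSpace ℝ (Fin n), 1 ≤ ‖x‖ → ∀ i j, σ x i j = σ x j i)
    (hσbd : ∀ x : EuclideanSpace ℝ (Fin n), 1 ≤ ‖x‖ → ‖σ x‖ ≤ C₀ * ‖x‖ ^ (-τ)) :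
    ∃ C > 0, ∀ y : EuclideanSpace ℝ (Fin n), 0 < ‖y‖ → ‖y‖ ≤ 1 → ∀ i j : Fin n,
      |pulledMetric n σ y i j - ‖y‖ ^ (-(4 : ℝ)) * (if i = j then (1 : ℝ) else 0)|
        ≤ C * ‖y‖ ^ (τ - 4) := by
  have hn0 : (0 : ℝ) < (n : ℝ) := by
    exact_mod_cast Nat.pos_of_ne_zero (by omega)
  refine ⟨9 * (n : ℝ) ^ 2 * C₀, by positivity, ?_⟩
  intro y hy hy1 i j
  set r := ‖y‖ with hrdef
  set a := r ^ (-(2 : ℝ)) with hadef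
  have ha : 0 < a := Real.rpow_pos_of_pos hy _
  -- the Kelvin image is in the exterior region
  have hKnorm : ‖kelvin n y‖ = r⁻¹ := kelvin_norm n y hy
  have hK1 : 1 ≤ ‖kelvin n y‖ := by
    rw [hKnorm]; exact one_le_inv₀ hy |>.mpr hy1
  -- bound on σ at the Kelvin image
  have hσval : ∀ k l : Fin n, |σ (kelvin n y) k l| ≤ C₀ * r ^ τ := by
    intro k l
    have h1 : ‖σ (kelvin n y)‖ ≤ C₀ * ‖kelvin n y‖ ^ (-τ) := hσbd _ hK1
    have h2 : ‖kelvin n y‖ ^ (-τ) = r ^ τ := by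
      rw [hKnorm, Real.inv_rpow hy.le, Real.rpow_neg hy.le, inv_inv]
    have h3 : |σ (kelvin n y) k l| ≤ ‖σ (kelvin n y)‖ := by
      calc |σ (kelvin n y) k l| = ‖σ (kelvin n y) k l‖ := rfl
        _ ≤ ‖σ (kelvin n y) k‖ := norm_le_pi_norm _ l
        _ ≤ ‖σ (kelvin n y)‖ := norm_le_pi_norm _ k
    rw [← h2]
    exact h3.trans h1
  -- split the pulled metric
  have split : pulledMetric n σ y i j
      = (∑ k, dKelvin n y i k * dKelvin n y j k)
        + ∑ k, ∑ l, dKelvin n y i k * dKelvin n y j l * σ (kelvin n y) k l := by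
    unfold pulledMetric
    simp only [mul_add, Finset.sum_add_distrib]
    congr 1
    refine Finset.sum_congr rfl fun k _ => ?_
    simp [mul_ite, mul_one, mul_zero, Finset.sum_ite_eq]
  rw [split, dKelvin_sum n y hy i j, ← hrdef, add_sub_cancel_left]
  -- bound the error sum
  have hterm : ∀ k l : Fin n,
      |dKelvin n y i k * dKelvin n y j l * σ (kelvin n y) k l|
        ≤ 9 * C₀ * (a * a * r ^ τ) := by
    intro k l
    rw [abs_mul, abs_mul]
    have b1 := dKelvin_bound n y hy i k
    have b2 := dKelvin_bound n y hy j l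
    rw [← hrdef, ← hadef] at b1 b2
    have hσ := hσval k l
    have h1 : |dKelvin n y i k| * |dKelvin n y j l| ≤ (3 * a) * (3 * a) :=
      mul_le_mul b1 b2 (abs_nonneg _) (by positivity)
    calc |dKelvin n y i k| * |dKelvin n y j l| * |σ (kelvin n y) k l|
        ≤ (3 * a) * (3 * a) * (C₀ * r ^ τ) := by
          apply mul_le_mul h1 hσ (abs_nonneg _) (by positivity)
      _ = 9 * C₀ * (a * a * r ^ τ) := by ring
  have hbound : |∑ k, ∑ l, dKelvin n y i k * dKelvin n y j l * σ (kelvin n y) k l|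
      ≤ (n : ℝ) ^ 2 * (9 * C₀ * (a * a * r ^ τ)) := by
    calc |∑ k, ∑ l, dKelvin n y i k * dKelvin n y j l * σ (kelvin n y) k l|
        ≤ ∑ k, |∑ l, dKelvin n y i k * dKelvin n y j l * σ (kelvin n y) k l| :=
          Finset.abs_sum_le_sum_abs _ _
      _ ≤ ∑ k : Fin n, ∑ l, |dKelvin n y i k * dKelvin n y j l * σ (kelvin n y) k l| :=
          Finset.sum_le_sum fun k _ => Finset.abs_sum_le_sum_abs _ _
      _ ≤ ∑ _k : Fin n, ∑ _l : Fin n, 9 * C₀ * (a * a * r ^ τ) :=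
          Finset.sum_le_sum fun k _ => Finset.sum_le_sum fun l _ => hterm k l
      _ = (n : ℝ) ^ 2 * (9 * C₀ * (a * a * r ^ τ)) := by
          simp [Finset.sum_const, Finset.card_univ]
          ring
  refine hbound.trans (le_of_eq ?_)
  have haa : a * a * r ^ τ = r ^ (τ - 4) := by
    rw [hadef, ← Real.rpow_add hy, ← Real.rpow_add hy]
    ring_nf
  rw [haa]; ring
end

section
/- Let n ≥ 3, κ > n and C₀ > 0, and let f : ℝⁿ → ℝ be a measurable function satisfying |f(y)| ≤ C₀ |y|^{−κ} for all y ≠ 0. Then there exists a constant C > 0 such that for every x ∈ ℝⁿ with r := |x| ≥ 1, the integral of |x − y|^{2−n} |f(y)| over the region B_r(x) \ B_r(0) = {y ∈ ℝⁿ : |y − x| < r and |y| ≥ r} is at most C r^{2−κ}. -/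
open MeasureTheory Metric Set
open scoped ENNReal

private lemma aux_preimage_smul_ball (n : ℕ) {r : ℝ} (hr : 0 < r) :
    (fun w : EuclideanSpace ℝ (Fin n) => r • w) ⁻¹' (ball 0 r) = ball 0 1 := by
  ext w
  simp only [Set.mem_preimage, mem_ball_zero_iff, norm_smul, Real.norm_eq_abs, abs_of_pos hr,
    mul_lt_iff_lt_one_right hr, mul_one]

private lemma aux_scale (n : ℕ) (p : ℝ) {r : ℝ} (hr : 0 < r) :
    ∫⁻ z in ball (0 : EuclideanSpace ℝ (Fin n)) r, ENNReal.ofReal (‖z‖ ^ p)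
      = ENNReal.ofReal (r ^ (p + n)) *
        ∫⁻ z in ball (0 : EuclideanSpace ℝ (Fin n)) 1, ENNReal.ofReal (‖z‖ ^ p) := by
  have hg : Measurable fun z : EuclideanSpace ℝ (Fin n) => ENNReal.ofReal (‖z‖ ^ p) :=
    (measurable_norm.pow_const p).ennreal_ofReal
  have hmap : Measure.map (fun w : EuclideanSpace ℝ (Fin n) => r • w) volume
      = ENNReal.ofReal |((r : ℝ) ^ n)⁻¹| • volume := by
    have := Measure.map_addHaar_smul (volume : Measure (EuclideanSpace ℝ (Fin n))) hr.ne'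
    simpa [finrank_euclideanSpace_fin] using this
  have key : ENNReal.ofReal (r ^ n) * ENNReal.ofReal |((r : ℝ) ^ n)⁻¹| = 1 := by
    rw [abs_of_pos (by positivity), ← ENNReal.ofReal_mul (by positivity),
      mul_inv_cancel₀ (by positivity), ENNReal.ofReal_one]
  have step2 : ∀ w : EuclideanSpace ℝ (Fin n),
      ENNReal.ofReal (‖r • w‖ ^ p) = ENNReal.ofReal (r ^ p) * ENNReal.ofReal (‖w‖ ^ p) := by
    intro w
    rw [norm_smul, Real.norm_eq_abs, abs_of_pos hr, Real.mul_rpow hr.le (norm_nonneg w),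
      ENNReal.ofReal_mul (Real.rpow_nonneg hr.le p)]
  calc ∫⁻ z in ball (0 : EuclideanSpace ℝ (Fin n)) r, ENNReal.ofReal (‖z‖ ^ p)
      = (ENNReal.ofReal (r ^ n) * ENNReal.ofReal |((r : ℝ) ^ n)⁻¹|)
        * ∫⁻ z in ball (0 : EuclideanSpace ℝ (Fin n)) r, ENNReal.ofReal (‖z‖ ^ p) := by
        rw [key, one_mul]
    _ = ENNReal.ofReal (r ^ n)
        * ∫⁻ z in ball (0 : EuclideanSpace ℝ (Fin n)) r, ENNReal.ofReal (‖z‖ ^ p)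
          ∂(ENNReal.ofReal |((r : ℝ) ^ n)⁻¹| • volume) := by
        rw [Measure.restrict_smul, lintegral_smul_measure, mul_assoc, smul_eq_mul]
    _ = ENNReal.ofReal (r ^ n)
        * ∫⁻ z in ball (0 : EuclideanSpace ℝ (Fin n)) r, ENNReal.ofReal (‖z‖ ^ p)
          ∂(Measure.map (fun w : EuclideanSpace ℝ (Fin n) => r • w) volume) := by
        rw [hmap]
    _ = ENNReal.ofReal (r ^ n)
        * ∫⁻ w in ball (0 : EuclideanSpace ℝ (Fin n)) 1, ENNReal.ofReal (‖r • w‖ ^ p) := by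
        rw [setLIntegral_map measurableSet_ball hg (measurable_const_smul r),
          aux_preimage_smul_ball n hr]
    _ = ENNReal.ofReal (r ^ n) * (ENNReal.ofReal (r ^ p)
        * ∫⁻ w in ball (0 : EuclideanSpace ℝ (Fin n)) 1, ENNReal.ofReal (‖w‖ ^ p)) := by
        simp_rw [step2]
        rw [lintegral_const_mul' _ _ ENNReal.ofReal_ne_top]
    _ = ENNReal.ofReal (r ^ (p + n)) *
        ∫⁻ z in ball (0 : EuclideanSpace ℝ (Fin n)) 1, ENNReal.ofReal (‖z‖ ^ p) := by
        rw [← mul_assoc, ← ENNReal.ofReal_mul (by positivity), Real.rpow_add hr,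
          Real.rpow_natCast, mul_comm ((r : ℝ) ^ (p : ℝ))]

private lemma aux_finite (n : ℕ) (hn : 3 ≤ n) :
    ∫⁻ z in ball (0 : EuclideanSpace ℝ (Fin n)) 1,
      ENNReal.ofReal (‖z‖ ^ ((2 : ℝ) - n)) < ⊤ := by
  haveI : Nonempty (Fin n) := ⟨⟨0, by omega⟩⟩
  have hn3 : (3 : ℝ) ≤ (n : ℝ) := by exact_mod_cast hn
  set p : ℝ := (2 : ℝ) - n with hp
  have hp0 : p ≤ 0 := by rw [hp]; linarith
  set q : ℝ := 1/2 with hq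
  have hqpos : (0 : ℝ) < q := by norm_num
  set A : ℕ → Set (EuclideanSpace ℝ (Fin n)) :=
    fun k => ball 0 (q ^ k) \ ball 0 (q ^ (k + 1)) with hA
  have hcover : ball (0 : EuclideanSpace ℝ (Fin n)) 1 ⊆ {0} ∪ ⋃ k, A k := by
    intro z hz
    rcases eq_or_ne z 0 with rfl | hz0
    · exact Or.inl rfl
    refine Or.inr ?_
    have hz1 : ‖z‖ < 1 := mem_ball_zero_iff.1 hz
    have hzpos : 0 < ‖z‖ := norm_pos_iff.2 hz0
    have hex : ∃ k : ℕ, q ^ (k + 1) ≤ ‖z‖ := by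
      obtain ⟨k, hk⟩ := exists_pow_lt_of_lt_one hzpos (by norm_num : q < 1)
      refine ⟨k, le_trans ?_ hk.le⟩
      exact pow_le_pow_of_le_one (by norm_num) (by norm_num) (Nat.le_succ k)
    have hk1 : q ^ (Nat.find hex + 1) ≤ ‖z‖ := Nat.find_spec hex
    have hk2 : ‖z‖ < q ^ (Nat.find hex) := by
      rcases Nat.eq_zero_or_pos (Nat.find hex) with h0 | h0
      · rw [h0]; simpa using hz1
      · have hmin := Nat.find_min hex (m := Nat.find hex - 1) (by omega)
        rw [Nat.sub_add_cancel h0] at hmin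
        exact lt_of_not_ge hmin
    refine mem_iUnion.2 ⟨Nat.find hex, mem_ball_zero_iff.2 hk2, fun hmem => ?_⟩
    exact absurd (mem_ball_zero_iff.1 hmem) (not_lt.2 hk1)
  set c : ℝ≥0∞ := ENNReal.ofReal (q ^ p)
    * volume (ball (0 : EuclideanSpace ℝ (Fin n)) 1) with hc
  have hbound : ∀ k : ℕ, (∫⁻ z in A k, ENNReal.ofReal (‖z‖ ^ p))
      ≤ c * ENNReal.ofReal (1/4) ^ k := by
    intro k
    have hre : (q ^ (k + 1)) ^ p * (q ^ k) ^ n = q ^ p * (1/4 : ℝ) ^ k := by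
      have e1 : ((q : ℝ) ^ (k + 1)) ^ p = q ^ ((((k : ℝ) + 1)) * p) := by
        rw [← Real.rpow_natCast q (k + 1), ← Real.rpow_mul hqpos.le]
        push_cast
        ring_nf
      have e2 : ((q : ℝ) ^ k) ^ n = q ^ (((k * n : ℕ) : ℝ)) := by
        rw [← pow_mul, Real.rpow_natCast]
      have e3 : ((1 : ℝ)/4) ^ k = q ^ (((2 * k : ℕ) : ℝ)) := by
        rw [Real.rpow_natCast, pow_mul]
        norm_num [hq]
      rw [e1, e2, e3, ← Real.rpow_add hqpos, ← Real.rpow_add hqpos]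
      congr 1
      push_cast [hp]
      ring
    calc ∫⁻ z in A k, ENNReal.ofReal (‖z‖ ^ p)
        ≤ ∫⁻ _ in A k, ENNReal.ofReal ((q ^ (k + 1)) ^ p) := by
          refine setLIntegral_mono measurable_const fun z hz => ?_
          refine ENNReal.ofReal_le_ofReal ?_
          refine Real.rpow_le_rpow_of_nonpos (by positivity) ?_ hp0
          exact not_lt.1 fun h => hz.2 (mem_ball_zero_iff.2 h)
      _ = ENNReal.ofReal ((q ^ (k + 1)) ^ p) * volume (A k) := setLIntegral_const _ _
      _ ≤ ENNReal.ofReal ((q ^ (k + 1)) ^ p) * (ENNReal.ofReal ((q ^ k) ^ n)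
            * volume (ball (0 : EuclideanSpace ℝ (Fin n)) 1)) := by
          gcongr
          calc volume (A k) ≤ volume (ball (0 : EuclideanSpace ℝ (Fin n)) (q ^ k)) :=
                measure_mono diff_subset
            _ = ENNReal.ofReal ((q ^ k) ^ n)
                * volume (ball (0 : EuclideanSpace ℝ (Fin n)) 1) := by
                rw [Measure.addHaar_ball volume _ (by positivity),
                  finrank_euclideanSpace_fin]
      _ = ENNReal.ofReal ((q ^ (k + 1)) ^ p * (q ^ k) ^ n)
            * volume (ball (0 : EuclideanSpace ℝ (Fin n)) 1) := by
          rw [← mul_assoc, ← ENNReal.ofReal_mul (by positivity)]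
      _ = c * ENNReal.ofReal (1/4) ^ k := by
          rw [hre, ENNReal.ofReal_mul (by positivity),
            ← ENNReal.ofReal_pow (by norm_num : (0:ℝ) ≤ 1/4), hc]
          ring
  calc ∫⁻ z in ball (0 : EuclideanSpace ℝ (Fin n)) 1, ENNReal.ofReal (‖z‖ ^ p)
      ≤ ∫⁻ z in ({0} ∪ ⋃ k, A k : Set (EuclideanSpace ℝ (Fin n))),
          ENNReal.ofReal (‖z‖ ^ p) := lintegral_mono_set hcover
    _ ≤ (∫⁻ z in ({0} : Set (EuclideanSpace ℝ (Fin n))), ENNReal.ofReal (‖z‖ ^ p))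
        + ∫⁻ z in ⋃ k, A k, ENNReal.ofReal (‖z‖ ^ p) := lintegral_union_le _ _ _
    _ = ∫⁻ z in ⋃ k, A k, ENNReal.ofReal (‖z‖ ^ p) := by
        rw [setLIntegral_measure_zero _ _ (measure_singleton 0), zero_add]
    _ ≤ ∑' k, ∫⁻ z in A k, ENNReal.ofReal (‖z‖ ^ p) := lintegral_iUnion_le _ _
    _ ≤ ∑' k, c * ENNReal.ofReal (1/4) ^ k := ENNReal.tsum_le_tsum hbound
    _ = c * (1 - ENNReal.ofReal (1/4))⁻¹ := by
        rw [ENNReal.tsum_mul_left, ENNReal.tsum_geometric]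
    _ < ⊤ := by
        refine ENNReal.mul_lt_top (ENNReal.mul_lt_top ENNReal.ofReal_lt_top
          measure_ball_lt_top) ?_
        rw [ENNReal.inv_lt_top, tsub_pos_iff_lt]
        exact ENNReal.ofReal_lt_one.2 (by norm_num)

/-- if `|f(y)| ≤ C₀ |y|^{-κ}` with `κ > n`, then the integral of
`|x-y|^{2-n} |f(y)|` over the region `B_r(x) \ B_r(0) = {y : |y - x| < r, |y| ≥ r}`,
where `r = |x| ≥ 1`, is at most `C r^{2-κ}`. -/
theorem newtonian_potential_near_region_estimate (n : ℕ) (hn : 3 ≤ n) (κ C₀ : ℝ)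
    (hκ : (n : ℝ) < κ) (hC₀ : 0 < C₀) (f : EuclideanSpace ℝ (Fin n) → ℝ)
    (hf : Measurable f)
    (hfbd : ∀ y : EuclideanSpace ℝ (Fin n), y ≠ 0 → |f y| ≤ C₀ * ‖y‖ ^ (-κ)) :
    ∃ C > 0, ∀ x : EuclideanSpace ℝ (Fin n), 1 ≤ ‖x‖ →
      (∫⁻ y in {y : EuclideanSpace ℝ (Fin n) | dist y x < ‖x‖ ∧ ‖x‖ ≤ ‖y‖},
          ENNReal.ofReal (‖x - y‖ ^ ((2 : ℝ) - n) * |f y|))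
        ≤ ENNReal.ofReal (C * ‖x‖ ^ (2 - κ)) := by
  have hn3 : (3 : ℝ) ≤ (n : ℝ) := by exact_mod_cast hn
  have hκ0 : 0 < κ := lt_of_le_of_lt (by linarith) hκ
  set p : ℝ := (2 : ℝ) - n with hp
  set I₁ := ∫⁻ z in ball (0 : EuclideanSpace ℝ (Fin n)) 1, ENNReal.ofReal (‖z‖ ^ p) with hI
  have hItop : I₁ < ⊤ := aux_finite n hn
  have hInn : 0 ≤ I₁.toReal := ENNReal.toReal_nonneg
  refine ⟨C₀ * (I₁.toReal + 1), by positivity, ?_⟩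
  intro x hx
  set r : ℝ := ‖x‖ with hr
  have r0 : 0 < r := lt_of_lt_of_le one_pos hx
  have hgmeas : Measurable fun y : EuclideanSpace ℝ (Fin n) =>
      ENNReal.ofReal (‖x - y‖ ^ p) * ENNReal.ofReal (C₀ * r ^ (-κ)) :=
    (((measurable_const.sub measurable_id).norm.pow_const p).ennreal_ofReal).mul_const _
  have hstep1 : (∫⁻ y in {y : EuclideanSpace ℝ (Fin n) | dist y x < r ∧ r ≤ ‖y‖},
        ENNReal.ofReal (‖x - y‖ ^ p * |f y|))
      ≤ ∫⁻ y in ball x r,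
        ENNReal.ofReal (‖x - y‖ ^ p) * ENNReal.ofReal (C₀ * r ^ (-κ)) := by
    refine le_trans (setLIntegral_mono hgmeas fun y hy => ?_)
      (lintegral_mono_set fun y hy => hy.1)
    have hy0 : y ≠ 0 := by
      intro h
      have h2 := hy.2
      rw [h, norm_zero] at h2
      linarith
    have h1 : |f y| ≤ C₀ * r ^ (-κ) := by
      refine le_trans (hfbd y hy0) ?_
      have := Real.rpow_le_rpow_of_nonpos r0 hy.2 (by linarith : -κ ≤ 0)
      nlinarith
    rw [← ENNReal.ofReal_mul (Real.rpow_nonneg (norm_nonneg _) p)]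
    exact ENNReal.ofReal_le_ofReal
      (mul_le_mul_of_nonneg_left h1 (Real.rpow_nonneg (norm_nonneg _) p))
  have htrans : (∫⁻ y in ball x r, ENNReal.ofReal (‖x - y‖ ^ p))
      = ∫⁻ z in ball (0 : EuclideanSpace ℝ (Fin n)) r, ENNReal.ofReal (‖z‖ ^ p) := by
    have hmp : MeasurePreserving (fun y : EuclideanSpace ℝ (Fin n) => x - y) volume volume :=
      Measure.measurePreserving_sub_left volume x
    have hpre : (fun y : EuclideanSpace ℝ (Fin n) => x - y) ⁻¹' (ball 0 r) = ball x r := by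
      ext y
      simp [mem_ball, dist_eq_norm, norm_sub_rev]
    rw [← hpre,
      hmp.setLIntegral_comp_preimage measurableSet_ball
        ((measurable_norm.pow_const p).ennreal_ofReal)]
  have hpn : p + (n : ℝ) = 2 := by rw [hp]; ring
  have hfinal : (∫⁻ y in ball x r,
        ENNReal.ofReal (‖x - y‖ ^ p) * ENNReal.ofReal (C₀ * r ^ (-κ)))
      = ENNReal.ofReal (r ^ (2 : ℝ)) * I₁ * ENNReal.ofReal (C₀ * r ^ (-κ)) := by
    rw [lintegral_mul_const' _ _ ENNReal.ofReal_ne_top, htrans, aux_scale n p r0, hpn, hI]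
  refine le_trans hstep1 (le_of_eq_of_le hfinal ?_)
  have hIle : I₁ ≤ ENNReal.ofReal I₁.toReal := (ENNReal.ofReal_toReal hItop.ne).symm.le
  calc ENNReal.ofReal (r ^ (2 : ℝ)) * I₁ * ENNReal.ofReal (C₀ * r ^ (-κ))
      ≤ ENNReal.ofReal (r ^ (2 : ℝ)) * ENNReal.ofReal I₁.toReal
        * ENNReal.ofReal (C₀ * r ^ (-κ)) := by gcongr
    _ = ENNReal.ofReal (r ^ (2 : ℝ) * I₁.toReal * (C₀ * r ^ (-κ))) := by
        rw [← ENNReal.ofReal_mul (by positivity), ← ENNReal.ofReal_mul (by positivity)]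
    _ ≤ ENNReal.ofReal (C₀ * (I₁.toReal + 1) * r ^ (2 - κ)) := by
        refine ENNReal.ofReal_le_ofReal ?_
        have hrw : r ^ (2 : ℝ) * r ^ (-κ) = r ^ (2 - κ) := by
          rw [← Real.rpow_add r0]
          ring_nf
        have hrpow : 0 ≤ r ^ (2 - κ) := Real.rpow_nonneg r0.le _
        calc r ^ (2 : ℝ) * I₁.toReal * (C₀ * r ^ (-κ))
            = (C₀ * I₁.toReal) * (r ^ (2 : ℝ) * r ^ (-κ)) := by ring
          _ = (C₀ * I₁.toReal) * r ^ (2 - κ) := by rw [hrw]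
          _ ≤ C₀ * (I₁.toReal + 1) * r ^ (2 - κ) := by nlinarith
end

section
/- Let n ≥ 3, κ > n and C₀ > 0, and let f : ℝⁿ → ℝ be a measurable function satisfying |f(y)| ≤ C₀ |y|^{−κ} for all y ≠ 0. Then there exists a constant C > 0 such that for every x ∈ ℝⁿ with r := |x| ≥ 1, the integral of |x − y|^{2−n} |f(y)| over the region ℝⁿ \ (B_r(0) ∪ B_r(x)) = {y ∈ ℝⁿ : |y| ≥ r and |y − x| ≥ r} is at most C r^{2−κ}. -/
open MeasureTheory Set ENNReal

/-- if `|f(y)| ≤ C₀ |y|^{-κ}` with `κ > n`, then the integral of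
`|x-y|^{2-n} |f(y)|` over the region `ℝⁿ \ (B_r(0) ∪ B_r(x)) = {y : |y| ≥ r, |y - x| ≥ r}`,
where `r = |x| ≥ 1`, is at most `C r^{2-κ}`. -/
theorem newtonian_potential_far_region_estimate (n : ℕ) (hn : 3 ≤ n) (κ C₀ : ℝ)
    (hκ : (n : ℝ) < κ) (hC₀ : 0 < C₀) (f : EuclideanSpace ℝ (Fin n) → ℝ)
    (hf : Measurable f)
    (hfbd : ∀ y : EuclideanSpace ℝ (Fin n), y ≠ 0 → |f y| ≤ C₀ * ‖y‖ ^ (-κ)) :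
    ∃ C > 0, ∀ x : EuclideanSpace ℝ (Fin n), 1 ≤ ‖x‖ →
      (∫⁻ y in {y : EuclideanSpace ℝ (Fin n) | ‖x‖ ≤ ‖y‖ ∧ ‖x‖ ≤ dist y x},
          ENNReal.ofReal (‖x - y‖ ^ ((2 : ℝ) - n) * |f y|))
        ≤ ENNReal.ofReal (C * ‖x‖ ^ (2 - κ)) := by
  classical
  have hκ0 : 0 < κ := lt_of_le_of_lt (Nat.cast_nonneg n) hκ
  have hdim : Module.finrank ℝ (EuclideanSpace ℝ (Fin n)) = n := finrank_euclideanSpace_fin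
  have hgmeas : Measurable fun y : EuclideanSpace ℝ (Fin n) => ENNReal.ofReal (‖y‖ ^ (-κ)) :=
    (measurable_norm.pow_const _).ennreal_ofReal
  set J : ℝ≥0∞ := ∫⁻ z in {z : EuclideanSpace ℝ (Fin n) | 1 ≤ ‖z‖},
      ENNReal.ofReal (‖z‖ ^ (-κ)) with hJ
  -- finiteness of J
  have hJfin : J < ∞ := by
    have hbd : ∀ z ∈ {z : EuclideanSpace ℝ (Fin n) | 1 ≤ ‖z‖},
        ENNReal.ofReal (‖z‖ ^ (-κ)) ≤
          ENNReal.ofReal ((2:ℝ) ^ κ) * ENNReal.ofReal ((1 + ‖z‖) ^ (-κ)) := by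
      intro z hz
      simp only [mem_setOf_eq] at hz
      rw [← ENNReal.ofReal_mul (by positivity)]
      apply ENNReal.ofReal_le_ofReal
      have h1 : 1 + ‖z‖ ≤ 2 * ‖z‖ := by linarith
      have h2 : ((2:ℝ) * ‖z‖) ^ (-κ) ≤ (1 + ‖z‖) ^ (-κ) :=
        Real.rpow_le_rpow_of_nonpos (by linarith) h1 (by linarith)
      have h3 : ((2:ℝ) * ‖z‖) ^ (-κ) = 2 ^ (-κ) * ‖z‖ ^ (-κ) :=
        Real.mul_rpow (by norm_num) (norm_nonneg z)
      have h4 : (2:ℝ) ^ (-κ) * ‖z‖ ^ (-κ) ≤ (1 + ‖z‖) ^ (-κ) := h3 ▸ h2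
      have h5 : (0:ℝ) < 2 ^ κ := by positivity
      calc ‖z‖ ^ (-κ) = 2 ^ κ * (2 ^ (-κ) * ‖z‖ ^ (-κ)) := by
            rw [← mul_assoc, ← Real.rpow_add (by norm_num : (0:ℝ) < 2)]
            simp
        _ ≤ 2 ^ κ * (1 + ‖z‖) ^ (-κ) := by
            exact mul_le_mul_of_nonneg_left h4 h5.le
    calc J ≤ ∫⁻ z in {z : EuclideanSpace ℝ (Fin n) | 1 ≤ ‖z‖},
          ENNReal.ofReal ((2:ℝ) ^ κ) * ENNReal.ofReal ((1 + ‖z‖) ^ (-κ)) :=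
        setLIntegral_mono (by measurability) hbd
      _ ≤ ∫⁻ z, ENNReal.ofReal ((2:ℝ) ^ κ) * ENNReal.ofReal ((1 + ‖z‖) ^ (-κ)) :=
        lintegral_mono_set (subset_univ _) |>.trans (by rw [Measure.restrict_univ])
      _ = ENNReal.ofReal ((2:ℝ) ^ κ) * ∫⁻ z, ENNReal.ofReal ((1 + ‖z‖) ^ (-κ)) :=
        lintegral_const_mul' _ _ ENNReal.ofReal_ne_top
      _ < ∞ := by
        apply ENNReal.mul_lt_top ENNReal.ofReal_lt_top
        have := finite_integral_one_add_norm (E := EuclideanSpace ℝ (Fin n))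
          (μ := volume) (r := κ) (by rw [hdim]; exact hκ)
        exact this
  -- scaling identity
  have key : ∀ r : ℝ, 0 < r →
      (∫⁻ y in {y : EuclideanSpace ℝ (Fin n) | r ≤ ‖y‖}, ENNReal.ofReal (‖y‖ ^ (-κ)))
        = ENNReal.ofReal (r ^ ((n : ℝ) - κ)) * J := by
    intro r hr
    have hrne : r ≠ 0 := hr.ne'
    have hmap : Measure.map (r • ·) (volume : Measure (EuclideanSpace ℝ (Fin n)))
        = ENNReal.ofReal |(r ^ n)⁻¹| • volume := by
      rw [Measure.map_addHaar_smul volume hrne, hdim]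
    have hvol : (volume : Measure (EuclideanSpace ℝ (Fin n)))
        = ENNReal.ofReal (r ^ n) • Measure.map (r • ·) volume := by
      rw [hmap, smul_smul, abs_of_pos (show (0:ℝ) < (r ^ n)⁻¹ by positivity),
        ← ENNReal.ofReal_mul (by positivity), mul_inv_cancel₀ (by positivity),
        ENNReal.ofReal_one, one_smul]
    have hset : MeasurableSet {y : EuclideanSpace ℝ (Fin n) | r ≤ ‖y‖} :=
      (isClosed_le continuous_const continuous_norm).measurableSet
    have hpre : (r • ·) ⁻¹' {y : EuclideanSpace ℝ (Fin n) | r ≤ ‖y‖}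
        = {z : EuclideanSpace ℝ (Fin n) | 1 ≤ ‖z‖} := by
      ext z
      simp only [mem_preimage, mem_setOf_eq, norm_smul, Real.norm_eq_abs, abs_of_pos hr]
      exact le_mul_iff_one_le_right hr
    calc (∫⁻ y in {y : EuclideanSpace ℝ (Fin n) | r ≤ ‖y‖}, ENNReal.ofReal (‖y‖ ^ (-κ)))
        = ∫⁻ y in {y : EuclideanSpace ℝ (Fin n) | r ≤ ‖y‖}, ENNReal.ofReal (‖y‖ ^ (-κ))
            ∂(ENNReal.ofReal (r ^ n) • Measure.map (r • ·) volume) := by rw [← hvol]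
      _ = ENNReal.ofReal (r ^ n) * ∫⁻ y in {y : EuclideanSpace ℝ (Fin n) | r ≤ ‖y‖},
            ENNReal.ofReal (‖y‖ ^ (-κ)) ∂(Measure.map (r • ·) volume) := by
          rw [Measure.restrict_smul, lintegral_smul_measure, smul_eq_mul]
      _ = ENNReal.ofReal (r ^ n) * ∫⁻ z in (r • ·) ⁻¹' {y : EuclideanSpace ℝ (Fin n) | r ≤ ‖y‖},
            ENNReal.ofReal (‖r • z‖ ^ (-κ)) := by
          rw [setLIntegral_map hset hgmeas (measurable_const_smul r)]
      _ = ENNReal.ofReal (r ^ n) * ∫⁻ z in {z : EuclideanSpace ℝ (Fin n) | 1 ≤ ‖z‖},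
            ENNReal.ofReal (r ^ (-κ)) * ENNReal.ofReal (‖z‖ ^ (-κ)) := by
          rw [hpre]
          congr 1
          apply lintegral_congr
          intro z
          rw [norm_smul, Real.norm_eq_abs, abs_of_pos hr,
            Real.mul_rpow hr.le (norm_nonneg z), ENNReal.ofReal_mul (by positivity)]
      _ = ENNReal.ofReal (r ^ n) * (ENNReal.ofReal (r ^ (-κ)) * J) := by
          rw [lintegral_const_mul' _ _ ENNReal.ofReal_ne_top]
      _ = ENNReal.ofReal (r ^ ((n : ℝ) - κ)) * J := by
          rw [← mul_assoc, ← ENNReal.ofReal_mul (by positivity)]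
          congr 2
          rw [← Real.rpow_natCast r n, ← Real.rpow_add hr, sub_eq_add_neg]
  refine ⟨C₀ * (J.toReal + 1), by positivity, ?_⟩
  intro x hx
  set r : ℝ := ‖x‖ with hr
  have hr0 : (0:ℝ) < r := lt_of_lt_of_le one_pos hx
  have h2n : (2:ℝ) - (n:ℝ) ≤ 0 := by
    have : (3:ℝ) ≤ (n:ℝ) := by exact_mod_cast hn
    linarith
  have hptwise : ∀ y ∈ {y : EuclideanSpace ℝ (Fin n) | r ≤ ‖y‖ ∧ r ≤ dist y x},
      ENNReal.ofReal (‖x - y‖ ^ ((2 : ℝ) - n) * |f y|)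
        ≤ ENNReal.ofReal (r ^ ((2:ℝ) - n) * C₀) * ENNReal.ofReal (‖y‖ ^ (-κ)) := by
    intro y hy
    obtain ⟨h1, h2⟩ := hy
    have hxy : r ≤ ‖x - y‖ := by rw [← dist_eq_norm, dist_comm]; exact h2
    have hy0 : y ≠ 0 := by
      intro h; rw [h, norm_zero] at h1; linarith
    have ha : ‖x - y‖ ^ ((2:ℝ) - n) ≤ r ^ ((2:ℝ) - n) :=
      Real.rpow_le_rpow_of_nonpos hr0 hxy h2n
    have hb : |f y| ≤ C₀ * ‖y‖ ^ (-κ) := hfbd y hy0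
    rw [← ENNReal.ofReal_mul (by positivity)]
    apply ENNReal.ofReal_le_ofReal
    calc ‖x - y‖ ^ ((2:ℝ) - n) * |f y| ≤ r ^ ((2:ℝ) - n) * (C₀ * ‖y‖ ^ (-κ)) := by
          apply mul_le_mul ha hb (abs_nonneg _) (by positivity)
      _ = r ^ ((2:ℝ) - n) * C₀ * ‖y‖ ^ (-κ) := by ring
  have hJle : J ≤ ENNReal.ofReal (J.toReal + 1) := by
    calc J = ENNReal.ofReal J.toReal := (ENNReal.ofReal_toReal hJfin.ne).symm
      _ ≤ ENNReal.ofReal (J.toReal + 1) := ENNReal.ofReal_le_ofReal (by linarith)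
  calc (∫⁻ y in {y : EuclideanSpace ℝ (Fin n) | ‖x‖ ≤ ‖y‖ ∧ ‖x‖ ≤ dist y x},
          ENNReal.ofReal (‖x - y‖ ^ ((2 : ℝ) - n) * |f y|))
      ≤ ∫⁻ y in {y : EuclideanSpace ℝ (Fin n) | r ≤ ‖y‖ ∧ r ≤ dist y x},
          ENNReal.ofReal (r ^ ((2:ℝ) - n) * C₀) * ENNReal.ofReal (‖y‖ ^ (-κ)) :=
      setLIntegral_mono (hgmeas.const_mul _) hptwise
    _ ≤ ∫⁻ y in {y : EuclideanSpace ℝ (Fin n) | r ≤ ‖y‖},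
          ENNReal.ofReal (r ^ ((2:ℝ) - n) * C₀) * ENNReal.ofReal (‖y‖ ^ (-κ)) :=
      lintegral_mono_set (fun y hy => hy.1)
    _ = ENNReal.ofReal (r ^ ((2:ℝ) - n) * C₀) *
          ∫⁻ y in {y : EuclideanSpace ℝ (Fin n) | r ≤ ‖y‖}, ENNReal.ofReal (‖y‖ ^ (-κ)) :=
      lintegral_const_mul' _ _ ENNReal.ofReal_ne_top
    _ = ENNReal.ofReal (r ^ ((2:ℝ) - n) * C₀) * (ENNReal.ofReal (r ^ ((n:ℝ) - κ)) * J) := by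
      rw [key r hr0]
    _ ≤ ENNReal.ofReal (r ^ ((2:ℝ) - n) * C₀) *
          (ENNReal.ofReal (r ^ ((n:ℝ) - κ)) * ENNReal.ofReal (J.toReal + 1)) := by
      gcongr
    _ = ENNReal.ofReal (C₀ * (J.toReal + 1) * r ^ (2 - κ)) := by
      rw [← ENNReal.ofReal_mul (by positivity), ← ENNReal.ofReal_mul (by positivity)]
      congr 1
      have : r ^ ((2:ℝ) - n) * r ^ ((n:ℝ) - κ) = r ^ (2 - κ) := by
        rw [← Real.rpow_add hr0]; ring_nf
      rw [← this]; ring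
end
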